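/- Let α > 0 and let f and g be probability distributions on ℕ such that m_{2+α} := max{∑_{n≥0} n^{2+α} f_n, ∑_{n≥0} n^{2+α} g_n} < ∞. Then W_2(f,g)^2 ≤ 2^{(2+α)/(1+α)} (α^{1/(1+α)} + α^{−α/(1+α)}) · m_{2+α}^{1/(1+α)} · W_1(f,g)^{α/(1+α)}. -/

import Mathlib

open scoped ENNReal

noncomputable section

/-- `f` is a probability distribution on `ℕ`. -/
def IsProbN (f : ℕ → ℝ) : Prop := (∀ n, 0 ≤ f n) ∧ HasSum f 1

/-- `π` is a coupling of the probability distributions `f` and `g` on `ℕ`. -/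
def IsCouplingN (π : ℕ → ℕ → ℝ) (f g : ℕ → ℝ) : Prop :=
  (∀ i j, 0 ≤ π i j) ∧ (∀ i, HasSum (fun j => π i j) (f i)) ∧
    (∀ j, HasSum (fun i => π i j) (g j))

/-- The Wasserstein distance of order `p` between probability distributions on `ℕ`. -/
def WassersteinN (p : ℝ) (f g : ℕ → ℝ) : ℝ≥0∞ :=
  (⨅ π : {π : ℕ → ℕ → ℝ // IsCouplingN π f g},
    ∑' (i : ℕ) (j : ℕ), ENNReal.ofReal (π.1 i j) * ENNReal.ofReal (|(i : ℝ) - (j : ℝ)| ^ p)) ^ (1 / p)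

/-- The probability generating function of `f`. -/
def pgfN (f : ℕ → ℝ) (z : ℝ) : ℝ := ∑' n : ℕ, z ^ n * f n

/-- The Toscani (Fourier-based) distance of order `s` between probability
distributions on `ℕ`. -/
def ToscaniN (s : ℝ) (f g : ℕ → ℝ) : ℝ≥0∞ :=
  ⨆ z : Set.Ioo (0 : ℝ) 1, ENNReal.ofReal (|pgfN f z - pgfN g z| / (1 - (z : ℝ)) ^ s)

/-! ### Auxiliary material for Statement 15 -/

/-- The cost of a coupling with respect to the `p`-th power of the distance. -/
def couplingCost (p : ℝ) (π : ℕ → ℕ → ℝ) : ℝ≥0∞ :=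
  ∑' (i : ℕ) (j : ℕ), ENNReal.ofReal (π i j) * ENNReal.ofReal (|(i : ℝ) - (j : ℝ)| ^ p)

lemma prodCoupling {f g : ℕ → ℝ} (hf : IsProbN f) (hg : IsProbN g) :
    IsCouplingN (fun i j => f i * g j) f g := by
  refine ⟨fun i j => mul_nonneg (hf.1 i) (hg.1 j), fun i => ?_, fun j => ?_⟩
  · simpa using hg.2.mul_left (f i)
  · simpa [mul_comm] using hf.2.mul_left (g j)

lemma marg_left {π : ℕ → ℕ → ℝ} {f g : ℕ → ℝ} (h : IsCouplingN π f g) (i : ℕ) :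
    ∑' j, ENNReal.ofReal (π i j) = ENNReal.ofReal (f i) := by
  rw [← ENNReal.ofReal_tsum_of_nonneg (fun j => h.1 i j) (h.2.1 i).summable,
    (h.2.1 i).tsum_eq]

lemma marg_right {π : ℕ → ℕ → ℝ} {f g : ℕ → ℝ} (h : IsCouplingN π f g) (j : ℕ) :
    ∑' i, ENNReal.ofReal (π i j) = ENNReal.ofReal (g j) := by
  rw [← ENNReal.ofReal_tsum_of_nonneg (fun i => h.1 i j) (h.2.2 j).summable,
    (h.2.2 j).tsum_eq]

lemma weight_left {π : ℕ → ℕ → ℝ} {f g : ℕ → ℝ} (h : IsCouplingN π f g) (c : ℕ → ℝ)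
    (hc : ∀ i, 0 ≤ c i) :
    ∑' (i : ℕ) (j : ℕ), ENNReal.ofReal (π i j) * ENNReal.ofReal (c i)
      = ∑' i : ℕ, ENNReal.ofReal (c i * f i) := by
  refine tsum_congr fun i => ?_
  rw [ENNReal.tsum_mul_right, marg_left h, ENNReal.ofReal_mul (hc i), mul_comm]

lemma weight_right {π : ℕ → ℕ → ℝ} {f g : ℕ → ℝ} (h : IsCouplingN π f g) (c : ℕ → ℝ)
    (hc : ∀ j, 0 ≤ c j) :
    ∑' (i : ℕ) (j : ℕ), ENNReal.ofReal (π i j) * ENNReal.ofReal (c j)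
      = ∑' j : ℕ, ENNReal.ofReal (c j * g j) := by
  rw [ENNReal.tsum_comm]
  refine tsum_congr fun j => ?_
  rw [ENNReal.tsum_mul_right, marg_right h, ENNReal.ofReal_mul (hc j), mul_comm]

lemma abs_pointwise (i j : ℕ) {p : ℝ} (hp : 1 ≤ p) :
    ENNReal.ofReal (|(i:ℝ) - (j:ℝ)| ^ p)
      ≤ ENNReal.ofReal ((2:ℝ) ^ (p-1)) *
        (ENNReal.ofReal ((i:ℝ) ^ p) + ENNReal.ofReal ((j:ℝ) ^ p)) := by
  have hij : |(i:ℝ) - (j:ℝ)| ≤ (i:ℝ) + (j:ℝ) := by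
    have hi : (0:ℝ) ≤ i := Nat.cast_nonneg i
    have hj : (0:ℝ) ≤ j := Nat.cast_nonneg j
    rw [abs_sub_le_iff]; constructor <;> linarith
  have h0 : (0:ℝ) ≤ p := by linarith
  calc ENNReal.ofReal (|(i:ℝ) - (j:ℝ)| ^ p)
      = ENNReal.ofReal |(i:ℝ) - (j:ℝ)| ^ p :=
        (ENNReal.ofReal_rpow_of_nonneg (abs_nonneg _) h0).symm
    _ ≤ (ENNReal.ofReal ((i:ℝ)) + ENNReal.ofReal ((j:ℝ))) ^ p := by
        refine ENNReal.rpow_le_rpow ?_ h0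
        rw [← ENNReal.ofReal_add (Nat.cast_nonneg i) (Nat.cast_nonneg j)]
        exact ENNReal.ofReal_le_ofReal hij
    _ ≤ (2:ℝ≥0∞) ^ (p-1) * (ENNReal.ofReal ((i:ℝ)) ^ p + ENNReal.ofReal ((j:ℝ)) ^ p) :=
        ENNReal.rpow_add_le_mul_rpow_add_rpow _ _ hp
    _ = ENNReal.ofReal ((2:ℝ) ^ (p-1)) *
        (ENNReal.ofReal ((i:ℝ) ^ p) + ENNReal.ofReal ((j:ℝ) ^ p)) := by
        rw [← ENNReal.ofReal_rpow_of_nonneg (Nat.cast_nonneg i) h0,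
          ← ENNReal.ofReal_rpow_of_nonneg (Nat.cast_nonneg j) h0,
          ← ENNReal.ofReal_rpow_of_pos (two_pos), ENNReal.ofReal_ofNat]

lemma real_pt {x N α : ℝ} (hx : 0 ≤ x) (hN : 0 < N) (hα : 0 < α) :
    x ^ (2:ℝ) ≤ N * x ^ (1:ℝ) + N ^ (-α) * x ^ (2+α) := by
  have hx2 : x ^ (2:ℝ) = x * x := by
    rw [show (2:ℝ) = ((2:ℕ):ℝ) by norm_num, Real.rpow_natCast]; ring
  rcases le_or_gt x N with hxN | hxN
  · have h1 : x * x ≤ N * x := mul_le_mul_of_nonneg_right hxN hx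
    have h2 : 0 ≤ N ^ (-α) * x ^ (2+α) := by positivity
    rw [hx2, Real.rpow_one]; linarith
  · have hx0 : 0 < x := hN.trans hxN
    have hNα : 0 < N ^ α := Real.rpow_pos_of_pos hN α
    have hxα : N ^ α ≤ x ^ α := Real.rpow_le_rpow hN.le hxN.le hα.le
    have key : 1 ≤ N ^ (-α) * x ^ α := by
      rw [Real.rpow_neg hN.le, inv_mul_eq_div, le_div_iff₀ hNα, one_mul]; exact hxα
    have hsplit : x ^ (2+α) = x ^ (2:ℝ) * x ^ α := Real.rpow_add hx0 2 α
    have hx2pos : 0 ≤ x ^ (2:ℝ) := Real.rpow_nonneg hx _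
    have h3 : x ^ (2:ℝ) ≤ N ^ (-α) * x ^ (2+α) := by
      rw [hsplit]
      calc x ^ (2:ℝ) = 1 * x ^ (2:ℝ) := (one_mul _).symm
        _ ≤ (N ^ (-α) * x ^ α) * x ^ (2:ℝ) := mul_le_mul_of_nonneg_right key hx2pos
        _ = N ^ (-α) * (x ^ (2:ℝ) * x ^ α) := by ring
    have h4 : 0 ≤ N * x ^ (1:ℝ) := by positivity
    linarith

lemma costMoment {π : ℕ → ℕ → ℝ} {f g : ℕ → ℝ} (h : IsCouplingN π f g) {α : ℝ} (hα : 0 < α)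
    (hf2 : Summable fun n : ℕ => (n : ℝ) ^ (2 + α) * f n)
    (hg2 : Summable fun n : ℕ => (n : ℝ) ^ (2 + α) * g n) :
    couplingCost (2+α) π ≤ ENNReal.ofReal ((2:ℝ) ^ (1+α)) *
      (ENNReal.ofReal (∑' n : ℕ, (n:ℝ) ^ (2+α) * f n)
        + ENNReal.ofReal (∑' n : ℕ, (n:ℝ) ^ (2+α) * g n)) := by
  have hp : (1:ℝ) ≤ 2 + α := by linarith
  have hexp : (2 + α) - 1 = 1 + α := by ring
  have hfnn : ∀ i : ℕ, 0 ≤ f i := fun i =>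
    (h.2.1 i).tsum_eq ▸ tsum_nonneg (h.1 i)
  have hgnn : ∀ j : ℕ, 0 ≤ g j := fun j =>
    (h.2.2 j).tsum_eq ▸ tsum_nonneg (fun i => h.1 i j)
  have hcnn : ∀ n : ℕ, 0 ≤ (n:ℝ) ^ (2+α) := fun n => Real.rpow_nonneg (Nat.cast_nonneg n) _
  calc couplingCost (2+α) π
      ≤ ∑' (i : ℕ) (j : ℕ),
          (ENNReal.ofReal ((2:ℝ) ^ (1+α)) * (ENNReal.ofReal (π i j) * ENNReal.ofReal ((i:ℝ) ^ (2+α)))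
          + ENNReal.ofReal ((2:ℝ) ^ (1+α)) * (ENNReal.ofReal (π i j) * ENNReal.ofReal ((j:ℝ) ^ (2+α)))) := by
        refine ENNReal.tsum_le_tsum fun i => ENNReal.tsum_le_tsum fun j => ?_
        have hpt := abs_pointwise i j hp
        rw [hexp] at hpt
        calc ENNReal.ofReal (π i j) * ENNReal.ofReal (|(i:ℝ) - (j:ℝ)| ^ (2+α))
            ≤ ENNReal.ofReal (π i j) * (ENNReal.ofReal ((2:ℝ) ^ (1+α)) *
                (ENNReal.ofReal ((i:ℝ) ^ (2+α)) + ENNReal.ofReal ((j:ℝ) ^ (2+α)))) :=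
              mul_le_mul_right hpt _
          _ = _ := by ring
    _ = ENNReal.ofReal ((2:ℝ) ^ (1+α)) *
          ((∑' (i : ℕ) (j : ℕ), ENNReal.ofReal (π i j) * ENNReal.ofReal ((i:ℝ) ^ (2+α)))
          + (∑' (i : ℕ) (j : ℕ), ENNReal.ofReal (π i j) * ENNReal.ofReal ((j:ℝ) ^ (2+α)))) := by
        simp only [ENNReal.tsum_add, ENNReal.tsum_mul_left, mul_add]
    _ = ENNReal.ofReal ((2:ℝ) ^ (1+α)) *
          ((∑' n : ℕ, ENNReal.ofReal ((n:ℝ) ^ (2+α) * f n))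
          + (∑' n : ℕ, ENNReal.ofReal ((n:ℝ) ^ (2+α) * g n))) := by
        rw [weight_left h _ hcnn, weight_right h _ hcnn]
    _ = ENNReal.ofReal ((2:ℝ) ^ (1+α)) *
          (ENNReal.ofReal (∑' n : ℕ, (n:ℝ) ^ (2+α) * f n)
          + ENNReal.ofReal (∑' n : ℕ, (n:ℝ) ^ (2+α) * g n)) := by
        rw [ENNReal.ofReal_tsum_of_nonneg (fun n => mul_nonneg (hcnn n) (hfnn n)) hf2,
          ENNReal.ofReal_tsum_of_nonneg (fun n => mul_nonneg (hcnn n) (hgnn n)) hg2]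

lemma cost_two_le {π : ℕ → ℕ → ℝ} {N α : ℝ} (hN : 0 < N) (hα : 0 < α) :
    couplingCost 2 π ≤ ENNReal.ofReal N * couplingCost 1 π
      + ENNReal.ofReal (N ^ (-α)) * couplingCost (2+α) π := by
  calc couplingCost 2 π
      ≤ ∑' (i : ℕ) (j : ℕ),
          (ENNReal.ofReal N * (ENNReal.ofReal (π i j) * ENNReal.ofReal (|(i:ℝ) - (j:ℝ)| ^ (1:ℝ)))
          + ENNReal.ofReal (N ^ (-α)) *
              (ENNReal.ofReal (π i j) * ENNReal.ofReal (|(i:ℝ) - (j:ℝ)| ^ (2+α)))) := by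
        refine ENNReal.tsum_le_tsum fun i => ENNReal.tsum_le_tsum fun j => ?_
        set x := |(i:ℝ) - (j:ℝ)| with hx
        have hx0 : 0 ≤ x := abs_nonneg _
        have hre : ENNReal.ofReal (x ^ (2:ℝ))
            ≤ ENNReal.ofReal N * ENNReal.ofReal (x ^ (1:ℝ))
              + ENNReal.ofReal (N ^ (-α)) * ENNReal.ofReal (x ^ (2+α)) := by
          rw [← ENNReal.ofReal_mul hN.le, ← ENNReal.ofReal_mul (by positivity),
            ← ENNReal.ofReal_add (by positivity) (by positivity)]
          exact ENNReal.ofReal_le_ofReal (real_pt hx0 hN hα)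
        calc ENNReal.ofReal (π i j) * ENNReal.ofReal (x ^ (2:ℝ))
            ≤ ENNReal.ofReal (π i j) *
              (ENNReal.ofReal N * ENNReal.ofReal (x ^ (1:ℝ))
                + ENNReal.ofReal (N ^ (-α)) * ENNReal.ofReal (x ^ (2+α))) :=
              mul_le_mul_right hre _
          _ = _ := by ring
    _ = ENNReal.ofReal N * couplingCost 1 π
        + ENNReal.ofReal (N ^ (-α)) * couplingCost (2+α) π := by
        simp only [couplingCost, ENNReal.tsum_add, ENNReal.tsum_mul_left, mul_add]

lemma real_opt {α C a : ℝ} (hα : 0 < α) (hC : 0 < C) (ha : 0 < a) :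
    ((α * C / a) ^ (1/(1+α))) * a + ((α * C / a) ^ (1/(1+α))) ^ (-α) * C
      = (α ^ (1/(1+α)) + α ^ (-(α * (1/(1+α))))) * C ^ (1/(1+α)) * a ^ (α * (1/(1+α))) := by
  set β := 1/(1+α) with hβdef
  have h1α : (0:ℝ) < 1 + α := by linarith
  have hβpos : 0 < β := by rw [hβdef]; positivity
  have hβ1 : α * β = 1 - β := by rw [hβdef]; field_simp; ring
  have hx : 0 < α * C / a := by positivity
  have hxβ : 0 < (α * C / a) ^ β := Real.rpow_pos_of_pos hx β
  have h1 : ((α * C / a) ^ β) * a = α ^ β * C ^ β * a ^ (α * β) := by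
    apply Real.log_injOn_pos (by simp [Set.mem_Ioi]; positivity)
      (by simp [Set.mem_Ioi]; positivity)
    rw [Real.log_mul hxβ.ne' ha.ne', Real.log_rpow hx, Real.log_div (by positivity) ha.ne',
      Real.log_mul hα.ne' hC.ne', Real.log_mul (by positivity) (by positivity),
      Real.log_mul (by positivity) (by positivity), Real.log_rpow hα, Real.log_rpow hC,
      Real.log_rpow ha]
    linear_combination (-Real.log a) * hβ1
  have h2 : ((α * C / a) ^ β) ^ (-α) * C = α ^ (-(α * β)) * C ^ β * a ^ (α * β) := by
    apply Real.log_injOn_pos (by simp [Set.mem_Ioi]; positivity)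
      (by simp [Set.mem_Ioi]; positivity)
    rw [Real.log_mul (by positivity) hC.ne', Real.log_rpow hxβ, Real.log_rpow hx,
      Real.log_div (by positivity) ha.ne', Real.log_mul hα.ne' hC.ne',
      Real.log_mul (by positivity) (by positivity),
      Real.log_mul (by positivity) (by positivity), Real.log_rpow hα, Real.log_rpow hC,
      Real.log_rpow ha]
    linear_combination (-Real.log C) * hβ1
  rw [h1, h2]; ring

/-- For `α > 0` and probability distributions `f, g` on `ℕ` with
finite moments of order `2 + α`, setting
`m_{2+α} := max{∑ n^{2+α} fₙ, ∑ n^{2+α} gₙ}`, one has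
`W₂(f,g)² ≤ 2^{(2+α)/(1+α)} (α^{1/(1+α)} + α^{-α/(1+α)}) · m_{2+α}^{1/(1+α)} · W₁(f,g)^{α/(1+α)}`. -/
theorem wasserstein_two_sq_le_wasserstein_one (α : ℝ) (hα : 0 < α) (f g : ℕ → ℝ)
    (hf : IsProbN f) (hg : IsProbN g)
    (hf2 : Summable fun n : ℕ => (n : ℝ) ^ (2 + α) * f n)
    (hg2 : Summable fun n : ℕ => (n : ℝ) ^ (2 + α) * g n) :
    WassersteinN 2 f g ^ 2 ≤
      ENNReal.ofReal
          ((2 : ℝ) ^ ((2 + α) / (1 + α)) * (α ^ (1 / (1 + α)) + α ^ (-α / (1 + α))) *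
            (max (∑' n : ℕ, (n : ℝ) ^ (2 + α) * f n) (∑' n : ℕ, (n : ℝ) ^ (2 + α) * g n)) ^
              (1 / (1 + α))) *
        WassersteinN 1 f g ^ (α / (1 + α)) := by
  classical
  haveI : Nonempty {π : ℕ → ℕ → ℝ // IsCouplingN π f g} :=
    ⟨⟨fun i j => f i * g j, prodCoupling hf hg⟩⟩
  set Sf := ∑' n : ℕ, (n : ℝ) ^ (2 + α) * f n with hSf
  set Sg := ∑' n : ℕ, (n : ℝ) ^ (2 + α) * g n with hSg
  set m := max Sf Sg with hm
  have h1α : (0:ℝ) < 1 + α := by linarith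
  have hcnn : ∀ n : ℕ, 0 ≤ (n:ℝ) ^ (2+α) := fun n => Real.rpow_nonneg (Nat.cast_nonneg n) _
  have hSf0 : 0 ≤ Sf := tsum_nonneg fun n => mul_nonneg (hcnn n) (hf.1 n)
  have hSg0 : 0 ≤ Sg := tsum_nonneg fun n => mul_nonneg (hcnn n) (hg.1 n)
  have hm0 : 0 ≤ m := le_max_of_le_left hSf0
  set J1 := ⨅ π : {π : ℕ → ℕ → ℝ // IsCouplingN π f g}, couplingCost 1 π.1 with hJ1
  set J2 := ⨅ π : {π : ℕ → ℕ → ℝ // IsCouplingN π f g}, couplingCost 2 π.1 with hJ2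
  have hW2 : WassersteinN 2 f g ^ 2 = J2 := by
    show (J2 ^ ((1:ℝ)/2)) ^ (2:ℕ) = J2
    rw [← ENNReal.rpow_natCast (J2 ^ ((1:ℝ)/2)) 2, ← ENNReal.rpow_mul]
    norm_num
  have hW1 : WassersteinN 1 f g = J1 := by
    show J1 ^ ((1:ℝ)/1) = J1
    norm_num
  rw [hW2, hW1]
  -- main case split on m = 0 or m > 0
  rcases hm0.eq_or_lt with hmz | hmpos
  · -- m = 0 : both distributions are δ₀ and the W₂ cost of the product coupling is 0
    have hf0 : ∀ n : ℕ, n ≠ 0 → f n = 0 := by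
      intro n hn
      have h1 : (n:ℝ) ^ (2+α) * f n ≤ Sf := Summable.le_tsum hf2 n fun b _ => mul_nonneg (hcnn b) (hf.1 b)
      have h2 : Sf ≤ 0 := le_trans (le_max_left Sf Sg) hmz.ge
      have h3 : (n:ℝ) ^ (2+α) * f n = 0 :=
        le_antisymm (h1.trans h2) (mul_nonneg (hcnn n) (hf.1 n))
      have hnpos : 0 < (n:ℝ) ^ (2+α) :=
        Real.rpow_pos_of_pos (by exact_mod_cast Nat.pos_of_ne_zero hn) _
      rcases mul_eq_zero.mp h3 with h | h
      · exact absurd h hnpos.ne'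
      · exact h
    have hg0 : ∀ n : ℕ, n ≠ 0 → g n = 0 := by
      intro n hn
      have h1 : (n:ℝ) ^ (2+α) * g n ≤ Sg := Summable.le_tsum hg2 n fun b _ => mul_nonneg (hcnn b) (hg.1 b)
      have h2 : Sg ≤ 0 := le_trans (le_max_right Sf Sg) hmz.ge
      have h3 : (n:ℝ) ^ (2+α) * g n = 0 :=
        le_antisymm (h1.trans h2) (mul_nonneg (hcnn n) (hg.1 n))
      have hnpos : 0 < (n:ℝ) ^ (2+α) :=
        Real.rpow_pos_of_pos (by exact_mod_cast Nat.pos_of_ne_zero hn) _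
      rcases mul_eq_zero.mp h3 with h | h
      · exact absurd h hnpos.ne'
      · exact h
    have hzero : couplingCost 2 (fun i j => f i * g j) = 0 := by
      unfold couplingCost
      rw [ENNReal.tsum_eq_zero]
      intro i
      rw [ENNReal.tsum_eq_zero]
      intro j
      rcases eq_or_ne i 0 with hi | hi
      · rcases eq_or_ne j 0 with hj | hj
        · subst hi; subst hj
          simp [Real.zero_rpow (by norm_num : (2:ℝ) ≠ 0)]
        · simp only [hg0 j hj, mul_zero, ENNReal.ofReal_zero, zero_mul]
      · simp only [hf0 i hi, zero_mul, ENNReal.ofReal_zero, zero_mul]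
    have : J2 ≤ 0 := by
      rw [hJ2]
      exact (iInf_le _ ⟨fun i j => f i * g j, prodCoupling hf hg⟩).trans hzero.le
    exact le_trans this zero_le
  · -- m > 0
    set C := (2:ℝ) ^ (2+α) * m with hC
    have hCpos : 0 < C := by positivity
    have hCost : ∀ π : {π : ℕ → ℕ → ℝ // IsCouplingN π f g},
        couplingCost (2+α) π.1 ≤ ENNReal.ofReal C := by
      intro π
      refine (costMoment π.2 hα hf2 hg2).trans ?_
      have h1 : ENNReal.ofReal Sf + ENNReal.ofReal Sg ≤ ENNReal.ofReal (m + m) := by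
        rw [ENNReal.ofReal_add hm0 hm0]
        exact add_le_add (ENNReal.ofReal_le_ofReal (le_max_left _ _))
          (ENNReal.ofReal_le_ofReal (le_max_right _ _))
      calc ENNReal.ofReal ((2:ℝ) ^ (1+α)) * (ENNReal.ofReal Sf + ENNReal.ofReal Sg)
          ≤ ENNReal.ofReal ((2:ℝ) ^ (1+α)) * ENNReal.ofReal (m + m) := mul_le_mul_right h1 _
        _ = ENNReal.ofReal ((2:ℝ) ^ (1+α) * (m + m)) := by
            rw [ENNReal.ofReal_mul (by positivity)]
        _ = ENNReal.ofReal C := by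
            rw [hC, show (2:ℝ) + α = (1+α) + 1 by ring, Real.rpow_add_one (two_ne_zero)]
            ring_nf
    have star : ∀ N : ℝ, 0 < N →
        J2 ≤ ENNReal.ofReal N * J1 + ENNReal.ofReal (N ^ (-α)) * ENNReal.ofReal C := by
      intro N hN
      calc J2 ≤ ⨅ π : {π : ℕ → ℕ → ℝ // IsCouplingN π f g},
            (ENNReal.ofReal N * couplingCost 1 π.1 + ENNReal.ofReal (N ^ (-α)) * ENNReal.ofReal C) := by
            refine le_iInf fun π => ?_
            refine (iInf_le _ π).trans ?_
            exact (cost_two_le hN hα).trans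
              (add_le_add le_rfl (mul_le_mul_right (hCost π) _))
        _ = (⨅ π : {π : ℕ → ℕ → ℝ // IsCouplingN π f g},
              ENNReal.ofReal N * couplingCost 1 π.1) + ENNReal.ofReal (N ^ (-α)) * ENNReal.ofReal C :=
            (ENNReal.iInf_add).symm
        _ = ENNReal.ofReal N * J1 + ENNReal.ofReal (N ^ (-α)) * ENNReal.ofReal C := by
            rw [hJ1, ENNReal.mul_iInf_of_ne (ENNReal.ofReal_pos.mpr hN).ne' ENNReal.ofReal_ne_top]
    rcases eq_or_ne J1 ⊤ with hJ1top | hJ1ne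
    · rw [hJ1top, ENNReal.top_rpow_of_pos (by positivity), ENNReal.mul_top]
      · exact le_top
      · refine (ENNReal.ofReal_pos.mpr ?_).ne'
        positivity
    · set a := J1.toReal with ha
      have hJ1eq : J1 = ENNReal.ofReal a := by
        rw [ha, ENNReal.ofReal_toReal hJ1ne]
      have ha0 : 0 ≤ a := ENNReal.toReal_nonneg
      rcases ha0.eq_or_lt with haz | hapos
      · -- a = 0, i.e. J1 = 0 : let N → ∞
        have hJ10 : J1 = 0 := by rw [hJ1eq, ← haz, ENNReal.ofReal_zero]
        have hstep : ∀ n : ℕ, J2 ≤ ENNReal.ofReal (((n:ℝ)+1) ^ (-α) * C) := by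
          intro n
          have h := star ((n:ℝ)+1) (by positivity)
          rw [hJ10, mul_zero, zero_add, ← ENNReal.ofReal_mul (by positivity)] at h
          exact h
        have htend : Filter.Tendsto (fun n : ℕ => ENNReal.ofReal (((n:ℝ)+1) ^ (-α) * C))
            Filter.atTop (nhds 0) := by
          have h1 : Filter.Tendsto (fun x : ℝ => x ^ (-α)) Filter.atTop (nhds 0) :=
            tendsto_rpow_neg_atTop hα
          have h2 : Filter.Tendsto (fun n : ℕ => ((n:ℝ)+1)) Filter.atTop Filter.atTop :=
            Filter.tendsto_atTop_add_const_right _ 1 tendsto_natCast_atTop_atTop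
          have h3 := (h1.comp h2).mul_const C
          rw [zero_mul] at h3
          have h4 := (ENNReal.continuous_ofReal.tendsto 0).comp h3
          rw [ENNReal.ofReal_zero] at h4
          exact h4
        have hJ20 : J2 ≤ 0 := ge_of_tendsto htend (Filter.Eventually.of_forall hstep)
        exact le_trans hJ20 zero_le
      · -- 0 < a : choose the optimal N
        set N := (α * C / a) ^ (1/(1+α)) with hN
        have hNpos : 0 < N := Real.rpow_pos_of_pos (by positivity) _
        have h := star N hNpos
        rw [hJ1eq] at h ⊢
        have heq : ENNReal.ofReal N * ENNReal.ofReal a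
            + ENNReal.ofReal (N ^ (-α)) * ENNReal.ofReal C
            = ENNReal.ofReal (N * a + N ^ (-α) * C) := by
          rw [← ENNReal.ofReal_mul hNpos.le, ← ENNReal.ofReal_mul (by positivity),
            ← ENNReal.ofReal_add (by positivity) (by positivity)]
        rw [heq] at h
        refine h.trans ?_
        rw [ENNReal.ofReal_rpow_of_nonneg ha0 (by positivity),
          ← ENNReal.ofReal_mul (by positivity)]
        apply ENNReal.ofReal_le_ofReal
        rw [hN, real_opt hα hCpos hapos]
        have hCβ : C ^ (1/(1+α)) = (2:ℝ) ^ ((2+α)/(1+α)) * m ^ (1/(1+α)) := by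
          rw [hC, Real.mul_rpow (by positivity) hm0, ← Real.rpow_mul (by norm_num : (0:ℝ) ≤ 2),
            mul_one_div]
        have hexp1 : -(α * (1/(1+α))) = -α / (1+α) := by
          rw [mul_one_div, neg_div]
        have hexp2 : α * (1/(1+α)) = α / (1+α) := mul_one_div _ _
        rw [hCβ, hexp1, hexp2]
        ring_nf
        exact le_refl _

end
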